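/- arXiv:1309.5125 — 3 statements merged into one kernel-verified Lean document; each statement's English description precedes it below -/
import Mathlib

section
/- Let D be a finite-dimensional central division algebra over a field K with D not isomorphic to K. If |gen(D)| = 1, i.e., every finite-dimensional central division K-algebra having the same isomorphism classes of maximal subfields as D is K-isomorphic to D, then D is K-isomorphic to its opposite algebra D^op; equivalently, the class of D in the Brauer group Br(K) has order 2, so exp(D) = 2. -/
open scoped TensorProduct

universe u

/-- `M` is a *maximal subfield* of the division algebra `D` over `K`:
a commutative `K`-subalgebra that is closed under inverses (hence a field)
and maximal among commutative `K`-subalgebras. -/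
def IsMaximalSubfield (K : Type*) [Field K] (D : Type*) [DivisionRing D] [Algebra K D]
    (M : Subalgebra K D) : Prop :=
  (∀ x ∈ M, ∀ y ∈ M, x * y = y * x) ∧
  (∀ x ∈ M, x⁻¹ ∈ M) ∧
  ∀ N : Subalgebra K D, (∀ x ∈ N, ∀ y ∈ N, x * y = y * x) → M ≤ N → N = M

/-- `D` and `D'` have the same maximal subfields, up to `K`-isomorphism:
every maximal subfield of one is `K`-isomorphic to a maximal subfield of the other.
This says exactly that a field extension of `K` is `K`-isomorphic to a maximal
subfield of `D` iff it is `K`-isomorphic to a maximal subfield of `D'`. -/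
def SameMaximalSubfields (K : Type*) [Field K] (D : Type*) [DivisionRing D] [Algebra K D]
    (D' : Type*) [DivisionRing D'] [Algebra K D'] : Prop :=
  (∀ M : Subalgebra K D, IsMaximalSubfield K D M →
    ∃ M' : Subalgebra K D', IsMaximalSubfield K D' M' ∧ Nonempty (M ≃ₐ[K] M')) ∧
  (∀ M' : Subalgebra K D', IsMaximalSubfield K D' M' →
    ∃ M : Subalgebra K D, IsMaximalSubfield K D M ∧ Nonempty (M ≃ₐ[K] M'))

/-- `D` has exponent `2` in the Brauer group of `K`: `D` is not (split) isomorphic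
to `K`, but the class of `D ⊗[K] D` in `Br K` is trivial, i.e. `D ⊗[K] D` is a
matrix algebra over `K`. -/
def HasExponentTwo (K : Type*) [Field K] (D : Type*) [Ring D] [Algebra K D] : Prop :=
  (¬ Nonempty (D ≃ₐ[K] K)) ∧
  ∃ n : ℕ, 0 < n ∧ Nonempty ((D ⊗[K] D) ≃ₐ[K] Matrix (Fin n) (Fin n) K)

/-- `|gen(D)| = 1`: every finite-dimensional central division `K`-algebra having the
same (isomorphism classes of) maximal subfields as `D` is `K`-isomorphic to `D`. -/
def GenusOne (K : Type u) [Field K] (D : Type u) [DivisionRing D] [Algebra K D] : Prop :=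
  ∀ (D' : Type u) [DivisionRing D'] [Algebra K D'],
    FiniteDimensional K D' → Algebra.IsCentral K D' →
    SameMaximalSubfields K D D' → Nonempty (D' ≃ₐ[K] D)

section Aux

open MulOpposite

variable {K : Type*} [Field K] {D : Type*} [DivisionRing D] [Algebra K D]

/-- If `∑ i ∈ s, a i * x * e i = 0` for all `x`, with the `e i` linearly independent
over the center `K`, then all `a i = 0`. -/
lemma aux_sum_mul_mul_eq_zero {ι : Type*} (hc : Algebra.IsCentral K D) (e : ι → D) :
    ∀ s : Finset ι, (∀ c : ι → K, ∑ i ∈ s, c i • e i = 0 → ∀ i ∈ s, c i = 0) →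
    ∀ a : ι → D, (∀ x : D, ∑ i ∈ s, a i * x * e i = 0) → ∀ i ∈ s, a i = 0 := by
  classical
  intro s
  induction s using Finset.strongInduction with
  | _ s ih =>
    intro he a h
    by_contra hcon
    push_neg at hcon
    obtain ⟨j, hj, haj⟩ := hcon
    set a' : ι → D := fun i => (a j)⁻¹ * a i with ha'def
    have ha'j : a' j = 1 := inv_mul_cancel₀ haj
    have h' : ∀ x : D, ∑ i ∈ s, a' i * x * e i = 0 := by
      intro x
      have := congrArg (fun z => (a j)⁻¹ * z) (h x)
      simpa [Finset.mul_sum, mul_assoc, ha'def] using this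
    have key : ∀ y x : D, ∑ i ∈ s.erase j, (a' i * y - y * a' i) * x * e i = 0 := by
      intro y x
      have h1 : ∑ i ∈ s, (a' i * y - y * a' i) * x * e i = 0 := by
        have e1 : ∑ i ∈ s, a' i * (y * x) * e i = 0 := h' (y * x)
        have e2 : ∑ i ∈ s, y * (a' i * x * e i) = 0 := by
          rw [← Finset.mul_sum, h' x, mul_zero]
        calc ∑ i ∈ s, (a' i * y - y * a' i) * x * e i
            = ∑ i ∈ s, (a' i * (y * x) * e i - y * (a' i * x * e i)) := by
              apply Finset.sum_congr rfl; intro i _; rw [sub_mul, sub_mul]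
              rw [mul_assoc (a' i) y x, mul_assoc y (a' i), mul_assoc y]
          _ = 0 := by rw [Finset.sum_sub_distrib, e1, e2, sub_zero]
      have hterm : (a' j * y - y * a' j) * x * e j = 0 := by
        rw [ha'j, one_mul, mul_one, sub_self, zero_mul, zero_mul]
      rw [← Finset.add_sum_erase s _ hj, hterm, zero_add] at h1
      exact h1
    have he' : ∀ c : ι → K, ∑ i ∈ s.erase j, c i • e i = 0 → ∀ i ∈ s.erase j, c i = 0 := by
      intro c hc0 i hi
      have hs : ∑ i ∈ s, (fun i => if i = j then 0 else c i) i • e i = 0 := by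
        rw [← Finset.add_sum_erase s _ hj]
        have hz : ((fun i => if i = j then (0:K) else c i) j) = 0 := by simp
        rw [hz, zero_smul, zero_add, ← hc0]
        apply Finset.sum_congr rfl
        intro i hi
        simp [Finset.ne_of_mem_erase hi]
      have := he _ hs i (Finset.mem_of_mem_erase hi)
      simpa [Finset.ne_of_mem_erase hi] using this
    have hcomm : ∀ i ∈ s.erase j, ∀ y : D, a' i * y = y * a' i := by
      intro i hi y
      have := ih (s.erase j) (Finset.erase_ssubset hj) he'
        (fun i => a' i * y - y * a' i) (key y) i hi
      exact sub_eq_zero.mp this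
    have hcentral : ∀ i ∈ s.erase j, ∃ k : K, algebraMap K D k = a' i := by
      intro i hi
      have hmem : a' i ∈ Subalgebra.center K D :=
        Subalgebra.mem_center_iff.2 fun y => (hcomm i hi y).symm
      exact Algebra.mem_bot.1 (hc.out hmem)
    have key2 : ∀ i : ι, ∃ k : K, i ∈ s → algebraMap K D k = a' i := by
      intro i
      by_cases hij : i = j
      · exact ⟨1, fun _ => by rw [hij, map_one, ha'j]⟩
      · by_cases his : i ∈ s
        · obtain ⟨k, hk⟩ := hcentral i (Finset.mem_erase.2 ⟨hij, his⟩)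
          exact ⟨k, fun _ => hk⟩
        · exact ⟨0, fun hmem => absurd hmem his⟩
    choose c hcspec using key2
    have hsum : ∑ i ∈ s, c i • e i = 0 := by
      have h1 := h' 1
      simp only [mul_one] at h1
      rw [← h1]
      apply Finset.sum_congr rfl
      intro i hi
      rw [Algebra.smul_def, hcspec i hi]
    have hcj : c j = 0 := he c hsum j hj
    have : (1 : D) = 0 := by
      have := hcspec j hj
      rw [hcj, map_zero, ha'j] at this
      exact this.symm
    exact one_ne_zero this

variable (K D) in
/-- Right multiplication as an algebra map from the opposite algebra. -/
def auxRmul : Dᵐᵒᵖ →ₐ[K] Module.End K D where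
  toFun b := LinearMap.mulRight K b.unop
  map_one' := by ext x; simp
  map_mul' b₁ b₂ := by ext x; simp [mul_assoc]
  map_zero' := by ext x; simp
  map_add' b₁ b₂ := by ext x; simp [mul_add]
  commutes' k := by
    ext x
    simp [Module.algebraMap_end_apply, Algebra.smul_def, ← Algebra.commutes]

variable (K D) in
/-- The sandwich map `D ⊗ Dᵐᵒᵖ → End K D`. -/
noncomputable def auxPhi : (D ⊗[K] Dᵐᵒᵖ) →ₐ[K] Module.End K D :=
  Algebra.TensorProduct.lift (Algebra.lmul K D) (auxRmul K D) (by
    intro a b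
    ext x
    simp [auxRmul, mul_assoc])

lemma auxPhi_tmul (a : D) (b : Dᵐᵒᵖ) (x : D) :
    auxPhi K D (a ⊗ₜ[K] b) x = a * x * b.unop := by
  simp [auxPhi, Algebra.TensorProduct.lift_tmul, auxRmul, mul_assoc]

variable (K D) in
lemma auxPhi_bijective [FiniteDimensional K D] (hc : Algebra.IsCentral K D) :
    Function.Bijective (auxPhi K D) := by
  haveI : FiniteDimensional K Dᵐᵒᵖ :=
    LinearEquiv.finiteDimensional (MulOpposite.opLinearEquiv K : D ≃ₗ[K] Dᵐᵒᵖ)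
  set n := Module.finrank K D with hn
  set bD := Module.finBasis K D with hbD
  set bOp : Module.Basis (Fin n) K Dᵐᵒᵖ := bD.map (MulOpposite.opLinearEquiv K) with hbOp
  set B := bD.tensorProduct bOp with hB
  have hinj : Function.Injective (auxPhi K D) := by
    rw [injective_iff_map_eq_zero]
    intro z hz
    set c := B.equivFun z with hcdef
    have hzc : z = ∑ p : Fin n × Fin n, c p • B p := (B.sum_equivFun z).symm
    have hindep : ∀ cc : Fin n → K, ∑ i ∈ Finset.univ, cc i • bD i = 0 →
        ∀ i ∈ Finset.univ, cc i = 0 := by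
      intro cc h0 i _
      exact Fintype.linearIndependent_iff.1 bD.linearIndependent cc h0 i
    have hcol : ∀ j : Fin n, ∑ i : Fin n, c (i, j) • bD i = 0 := by
      have hmain : ∀ x : D, ∑ j ∈ Finset.univ, (∑ i : Fin n, c (i, j) • bD i) * x * bD j = 0 := by
        intro x
        have h0 : (auxPhi K D z) x = 0 := by rw [hz]; rfl
        rw [hzc] at h0
        simp only [map_sum, map_smul, LinearMap.sum_apply, LinearMap.smul_apply] at h0
        have h1 : ∑ p : Fin n × Fin n, c p • (bD p.1 * x * bD p.2) = 0 := by
          rw [← h0]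
          apply Finset.sum_congr rfl
          intro p _
          congr 1
          rw [hB, Module.Basis.tensorProduct_apply', auxPhi_tmul]
          simp [hbOp]
        rw [Fintype.sum_prod_type] at h1
        rw [Finset.sum_comm] at h1
        rw [← h1]
        apply Finset.sum_congr rfl
        intro j _
        rw [Finset.sum_mul, Finset.sum_mul]
        apply Finset.sum_congr rfl
        intro i _
        rw [smul_mul_assoc, smul_mul_assoc]
      intro j
      exact aux_sum_mul_mul_eq_zero hc bD Finset.univ hindep _ hmain j (Finset.mem_univ j)
    have hc0 : ∀ p : Fin n × Fin n, c p = 0 := by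
      intro ⟨i, j⟩
      exact Fintype.linearIndependent_iff.1 bD.linearIndependent _ (hcol j) i
    rw [hzc]
    simp [hc0]
  refine ⟨hinj, ?_⟩
  have hfr : Module.finrank K (D ⊗[K] Dᵐᵒᵖ) = Module.finrank K (Module.End K D) := by
    rw [Module.finrank_tensorProduct]
    rw [show Module.finrank K Dᵐᵒᵖ = Module.finrank K D from
      ((MulOpposite.opLinearEquiv K : D ≃ₗ[K] Dᵐᵒᵖ).finrank_eq).symm]
    rw [Module.finrank_linearMap]
  exact (LinearMap.injective_iff_surjective_of_finrank_eq_finrank hfr).1 hinj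

section Op

variable {K : Type*} [Field K] {D : Type*} [DivisionRing D] [Algebra K D]

lemma aux_op_max {M : Subalgebra K D} (h : IsMaximalSubfield K D M) :
    IsMaximalSubfield K Dᵐᵒᵖ M.op := by
  obtain ⟨hcm, hinv, hmax⟩ := h
  refine ⟨?_, ?_, ?_⟩
  · intro x hx y hy
    apply MulOpposite.unop_injective
    simp only [MulOpposite.unop_mul]
    exact (hcm _ (Subalgebra.mem_op.1 hx) _ (Subalgebra.mem_op.1 hy)).symm
  · intro x hx
    rw [Subalgebra.mem_op, MulOpposite.unop_inv]
    exact hinv _ (Subalgebra.mem_op.1 hx)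
  · intro N hN hle
    have h1 : M ≤ N.unop := Subalgebra.op_le_iff.1 hle
    have h2 : ∀ x ∈ N.unop, ∀ y ∈ N.unop, x * y = y * x := by
      intro x hx y hy
      have := hN _ (Subalgebra.mem_unop.1 hy) _ (Subalgebra.mem_unop.1 hx)
      have := congrArg MulOpposite.unop this
      simpa using this
    have h3 : N.unop = M := hmax N.unop h2 h1
    rw [← Subalgebra.op_unop N, h3]

lemma aux_unop_max {N : Subalgebra K Dᵐᵒᵖ} (h : IsMaximalSubfield K Dᵐᵒᵖ N) :
    IsMaximalSubfield K D N.unop := by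
  obtain ⟨hcm, hinv, hmax⟩ := h
  refine ⟨?_, ?_, ?_⟩
  · intro x hx y hy
    have := hcm _ (Subalgebra.mem_unop.1 hy) _ (Subalgebra.mem_unop.1 hx)
    have := congrArg MulOpposite.unop this
    simpa using this
  · intro x hx
    rw [Subalgebra.mem_unop, MulOpposite.op_inv]
    exact hinv _ (Subalgebra.mem_unop.1 hx)
  · intro M hM hle
    have h1 : N ≤ M.op := Subalgebra.le_op_iff.2 hle
    have h2 : ∀ x ∈ M.op, ∀ y ∈ M.op, x * y = y * x := by
      intro x hx y hy
      apply MulOpposite.unop_injective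
      simp only [MulOpposite.unop_mul]
      exact (hM _ (Subalgebra.mem_op.1 hx) _ (Subalgebra.mem_op.1 hy)).symm
    have h3 : M.op = N := hmax M.op h2 h1
    rw [← h3, Subalgebra.unop_op]

/-- A commutative subalgebra is isomorphic to its opposite. -/
noncomputable def auxOpEquiv (M : Subalgebra K D)
    (hcm : ∀ x ∈ M, ∀ y ∈ M, x * y = y * x) : M ≃ₐ[K] M.op where
  toFun x := ⟨MulOpposite.op (x : D), Subalgebra.mem_op.2 (by simpa using x.2)⟩
  invFun y := ⟨(y : Dᵐᵒᵖ).unop, Subalgebra.mem_op.1 y.2⟩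
  left_inv x := by ext; simp
  right_inv y := by ext; simp
  map_mul' x y := by
    ext
    apply MulOpposite.unop_injective
    simp only [MulMemClass.coe_mul, MulOpposite.unop_mul, MulOpposite.unop_op]
    exact hcm _ x.2 _ y.2
  map_add' x y := by ext; simp
  commutes' k := by ext; simp [Algebra.algebraMap_eq_smul_one]

end Op

end Aux

/-- Let `D` be a finite-dimensional central division algebra over `K` with `D` not
isomorphic to `K`.  If `|gen(D)| = 1` — every finite-dimensional central division
`K`-algebra with the same isomorphism classes of maximal subfields as `D` is
`K`-isomorphic to `D` — then `D` is `K`-isomorphic to its opposite algebra `Dᵐᵒᵖ`;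
equivalently, the class of `D` in `Br K` has order `2`, i.e. `exp(D) = 2`. -/
theorem genus_one_implies_exponent_two (K : Type u) [Field K] (D : Type u)
    [DivisionRing D] [Algebra K D] [FiniteDimensional K D]
    (hc : Algebra.IsCentral K D) (hne : ¬ Nonempty (D ≃ₐ[K] K))
    (hgen : GenusOne K D) :
    Nonempty (D ≃ₐ[K] Dᵐᵒᵖ) ∧ HasExponentTwo K D := by
  classical
  haveI : FiniteDimensional K Dᵐᵒᵖ :=
    LinearEquiv.finiteDimensional (MulOpposite.opLinearEquiv K : D ≃ₗ[K] Dᵐᵒᵖ)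
  have hcop : Algebra.IsCentral K Dᵐᵒᵖ := by
    constructor
    intro x hx
    have hxc : x.unop ∈ Subalgebra.center K D := by
      rw [Subalgebra.mem_center_iff] at hx ⊢
      intro b
      have h1 := hx (MulOpposite.op b)
      have h2 := congrArg MulOpposite.unop h1
      simpa using h2.symm
    obtain ⟨k, hk⟩ := Algebra.mem_bot.1 (hc.out hxc)
    exact Algebra.mem_bot.2 ⟨k, by
      rw [show algebraMap K Dᵐᵒᵖ k = MulOpposite.op (algebraMap K D k) from rfl, hk,
        MulOpposite.op_unop]⟩
  have hsame : SameMaximalSubfields K D Dᵐᵒᵖ := by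
    constructor
    · intro M hM
      exact ⟨M.op, aux_op_max hM, ⟨auxOpEquiv M hM.1⟩⟩
    · intro N hN
      exact ⟨N.unop, aux_unop_max hN,
        ⟨(auxOpEquiv N.unop (aux_unop_max hN).1).trans
          (Subalgebra.equivOfEq _ _ (Subalgebra.op_unop N))⟩⟩
  obtain ⟨σ⟩ := hgen Dᵐᵒᵖ ‹_› hcop hsame
  refine ⟨⟨σ.symm⟩, hne, Module.finrank K D, Module.finrank_pos, ?_⟩
  exact ⟨(Algebra.TensorProduct.congr AlgEquiv.refl σ.symm).trans
    ((AlgEquiv.ofBijective _ (auxPhi_bijective K D hc)).trans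
      (algEquivMatrix (Module.finBasis K D)))⟩
end

section
/- (Nagao) For every finite field F, the group SL_2(F[t]) of 2×2 matrices of determinant 1 with entries in the polynomial ring F[t] is not finitely generated. -/
open Polynomial Matrix

namespace Nagao

variable {F : Type*} [Field F]

abbrev SL2 (F : Type*) [Field F] := Matrix.SpecialLinearGroup (Fin 2) (Polynomial F)

noncomputable def E (p : Polynomial F) : SL2 F := ⟨!![1, p; 0, 1], by simp [Matrix.det_fin_two_of]⟩

noncomputable def W : SL2 F := ⟨!![0, 1; -1, 0], by simp [Matrix.det_fin_two_of]⟩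

noncomputable def UT (u : (Polynomial F)ˣ) (q : Polynomial F) : SL2 F :=
  ⟨!![(u : Polynomial F), q; 0, ((u⁻¹ : (Polynomial F)ˣ) : Polynomial F)], by
    simp [Matrix.det_fin_two_of, ← Units.val_mul]⟩

noncomputable def LT (s : Polynomial F) : SL2 F := ⟨!![1, 0; s, 1], by simp [Matrix.det_fin_two_of]⟩

noncomputable def C (ps : List (Polynomial F)) : SL2 F := (ps.map (fun p => E p * W)).prod

lemma sl2_ext (A B : SL2 F) (h : (A : Matrix (Fin 2) (Fin 2) (Polynomial F)) = B) : A = B :=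
  Subtype.ext h

lemma id1 (u v : (Polynomial F)ˣ) (q r : Polynomial F) :
    UT u q * UT v r = UT (u * v) ((u : Polynomial F) * r + ((v⁻¹ : (Polynomial F)ˣ) : Polynomial F) * q) := by
  apply sl2_ext
  simp only [Matrix.SpecialLinearGroup.coe_mul]
  simp [UT, Matrix.SpecialLinearGroup.coe_mul, Matrix.mul_fin_two]
  ring_nf
  simp

lemma UT_one : (UT 1 0 : SL2 F) = 1 := by
  apply sl2_ext; simp [UT, Matrix.one_fin_two]

lemma id2 (u : (Polynomial F)ˣ) (q : Polynomial F) : (UT u q)⁻¹ = UT u⁻¹ (-q) := by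
  rw [inv_eq_iff_mul_eq_one, id1, mul_inv_cancel, inv_inv]
  rw [show (u : Polynomial F) * (-q) + (u : Polynomial F) * q = 0 by ring]
  exact UT_one

lemma E_eq_UT (p : Polynomial F) : E p = UT 1 p := by
  apply sl2_ext; simp [E, UT]

lemma id3 (u : (Polynomial F)ˣ) (q : Polynomial F) :
    UT u q = UT u 0 * E (((u⁻¹ : (Polynomial F)ˣ) : Polynomial F) * q) := by
  rw [E_eq_UT, id1, mul_one]
  congr 1
  rw [← mul_assoc, Units.mul_inv, one_mul, inv_one, Units.val_one, one_mul]; ring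


-- Z = -1 scalar
noncomputable def Z : SL2 F := UT (-1) 0

lemma Z_coe : ((Z : SL2 F) : Matrix (Fin 2) (Fin 2) (Polynomial F)) = -1 := by
  ext i j
  fin_cases i <;> fin_cases j <;> simp [Z, UT, Matrix.one_apply]

lemma Z_comm (x : SL2 F) : Z * x = x * Z := by
  apply sl2_ext
  rw [Matrix.SpecialLinearGroup.coe_mul, Matrix.SpecialLinearGroup.coe_mul, Z_coe]
  simp

lemma id4 (p : Polynomial F) (u : (Polynomial F)ˣ) :
    E p * W * UT u 0 = UT u⁻¹ 0 * (E ((u : Polynomial F) * (u : Polynomial F) * p) * W) := by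
  apply sl2_ext
  simp only [Matrix.SpecialLinearGroup.coe_mul]
  simp [E, W, UT, Matrix.SpecialLinearGroup.coe_mul, Matrix.mul_fin_two]
  have h : ((u⁻¹ : (Polynomial F)ˣ) : Polynomial F) * ((u : Polynomial F) * (u : Polynomial F) * p) =
      p * (u : Polynomial F) := by
    rw [show ((u : Polynomial F) * (u : Polynomial F) * p) = (u : Polynomial F) * ((u : Polynomial F) * p) by
      ring, ← mul_assoc, Units.inv_mul, one_mul]; ring
  rw [h]

lemma Z_mid (a b : SL2 F) : a * (Z * b) = Z * (a * b) := by
  rw [← mul_assoc, ← Z_comm, mul_assoc]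

lemma id5 (m : Polynomial F) : W * E m * W = (Z : SL2 F) * LT (-m) := by
  apply sl2_ext
  simp only [Matrix.SpecialLinearGroup.coe_mul, Z_coe, neg_mul, one_mul]
  simp [E, W, LT, Matrix.mul_fin_two]

lemma id6 (r : Polynomial F) (s : (Polynomial F)ˣ) :
    E r * LT (s : Polynomial F) =
      UT 1 (r + ((s⁻¹ : (Polynomial F)ˣ) : Polynomial F)) * W * UT (-s) (-1) := by
  apply sl2_ext
  simp only [Matrix.SpecialLinearGroup.coe_mul]
  simp [E, W, LT, UT, Matrix.SpecialLinearGroup.coe_mul, Matrix.mul_fin_two]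
  rw [show -((-((s⁻¹ : (Polynomial F)ˣ) : Polynomial F) + -r) * (s : Polynomial F)) =
      ((s⁻¹ : (Polynomial F)ˣ) : Polynomial F) * (s : Polynomial F) + r * (s : Polynomial F) by ring,
    Units.inv_mul]

lemma W_mul_W : (W : SL2 F) * W = Z := by
  apply sl2_ext
  simp only [Matrix.SpecialLinearGroup.coe_mul, Z_coe]
  simp [W, Matrix.mul_fin_two]
  ext i j
  fin_cases i <;> fin_cases j <;> simp [Matrix.one_apply]

lemma W_inv : (W : SL2 F)⁻¹ = W * Z := by
  rw [inv_eq_iff_mul_eq_one, ← mul_assoc, W_mul_W, Z, id1]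
  rw [show ((-1 : (Polynomial F)ˣ) * -1) = 1 by simp]
  rw [show ((-1 : (Polynomial F)ˣ) : Polynomial F) * 0 + (((-1 : (Polynomial F)ˣ)⁻¹ : (Polynomial F)ˣ) : Polynomial F) * 0 = 0 by ring]
  exact UT_one

lemma C_nil : (C [] : SL2 F) = 1 := rfl

lemma C_cons (p : Polynomial F) (ps : List (Polynomial F)) :
    C (p :: ps) = E p * W * C ps := by
  simp [C, List.prod_cons]

lemma C_append_singleton (ps : List (Polynomial F)) (p : Polynomial F) :
    C (ps ++ [p]) = C ps * (E p * W) := by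
  simp [C]


lemma push (ps : List (Polynomial F)) (u : (Polynomial F)ˣ) :
    ∃ (v : (Polynomial F)ˣ) (ps' : List (Polynomial F)),
      (List.Forall₂ (fun a b => degree b = degree a) ps ps') ∧
      C ps * UT u 0 = UT v 0 * C ps' := by
  induction ps generalizing u with
  | nil => exact ⟨u, [], List.Forall₂.nil, by simp [C_nil]⟩
  | cons p ps ih =>
    obtain ⟨v, ps', hdeg, heq⟩ := ih u
    refine ⟨v⁻¹, ((v : Polynomial F) * (v : Polynomial F) * p) :: ps', ?_, ?_⟩
    · exact List.Forall₂.cons (by simp [degree_mul, degree_coe_units]) hdeg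
    · rw [C_cons, mul_assoc, heq, ← mul_assoc, id4, mul_assoc, ← C_cons]

def IsConst (h : SL2 F) : Prop :=
  ∀ i j, ((h : Matrix (Fin 2) (Fin 2) (Polynomial F)) i j).degree ≤ 0

lemma IsConst_mul {h g : SL2 F} (hh : IsConst h) (hg : IsConst g) : IsConst (h * g) := by
  intro i j
  rw [Matrix.SpecialLinearGroup.coe_mul, Matrix.mul_apply, Fin.sum_univ_two]
  refine le_trans (degree_add_le _ _) (max_le ?_ ?_) <;>
    exact le_trans (degree_mul_le _ _) (by simpa using add_le_add (hh _ _) (hg _ _))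

lemma IsConst_one : IsConst (1 : SL2 F) := by
  intro i j
  fin_cases i <;> fin_cases j <;>
    simp [Matrix.one_apply]

lemma IsConst_UT0 (v : (Polynomial F)ˣ) : IsConst (UT v 0) := by
  intro i j
  fin_cases i <;> fin_cases j <;> simp [UT, degree_coe_units, -Units.val_inv_eq_inv_val]

lemma IsConst_Z : IsConst (Z : SL2 F) := IsConst_UT0 _

lemma IsConst_EW {m : Polynomial F} (hm : m.degree ≤ 0) : IsConst (E m * W) := by
  intro i j
  rw [Matrix.SpecialLinearGroup.coe_mul]
  fin_cases i <;> fin_cases j <;> simp [E, W, Matrix.mul_fin_two, hm]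


def T (N : ℕ) : Set (SL2 F) :=
  {x | ∃ u q, degree q ≤ (N : ℕ) ∧ x = UT u q} ∪ {W}

noncomputable def H (N : ℕ) : Subgroup (SL2 F) := Subgroup.closure (T N)

def GoodList (N : ℕ) (ps : List (Polynomial F)) : Prop :=
  ∀ p ∈ ps, 0 < p.degree ∧ p.degree ≤ (N : ℕ)

def Q (N : ℕ) (g : SL2 F) : Prop :=
  ∃ (h : SL2 F) (ps : List (Polynomial F)) (u : (Polynomial F)ˣ) (q : Polynomial F),
    IsConst h ∧ GoodList N ps ∧ degree q ≤ (N : ℕ) ∧ g = h * C ps * UT u q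

lemma Q_one (N : ℕ) : Q N (1 : SL2 F) := by
  refine ⟨1, [], 1, 0, IsConst_one, by simp [GoodList], by simp, by simp [C_nil, UT_one]⟩

lemma stepUT {N : ℕ} {g : SL2 F} (hg : Q N g) {v : (Polynomial F)ˣ} {r : Polynomial F}
    (hr : degree r ≤ (N : ℕ)) : Q N (g * UT v r) := by
  obtain ⟨h, ps, u, q, hh, hps, hq, rfl⟩ := hg
  refine ⟨h, ps, u * v, (u : Polynomial F) * r + ((v⁻¹ : (Polynomial F)ˣ) : Polynomial F) * q,
    hh, hps, ?_, by rw [mul_assoc, mul_assoc, ← id1, ← mul_assoc, ← mul_assoc]⟩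
  refine le_trans (degree_add_le _ _) (max_le ?_ ?_) <;>
    refine le_trans (degree_mul_le _ _) ?_
  · rw [degree_coe_units]; simpa using hr
  · rw [degree_coe_units]; simpa using hq

lemma Core {N : ℕ} {ps : List (Polynomial F)} {m : Polynomial F}
    (hps : GoodList N ps) (hm : degree m ≤ (N : ℕ)) :
    ∃ (h₀ : SL2 F) (ps' : List (Polynomial F)) (u₂ : (Polynomial F)ˣ) (q₂ : Polynomial F),
      IsConst h₀ ∧ GoodList N ps' ∧ degree q₂ ≤ (N : ℕ) ∧
      C ps * (E m * W) = h₀ * C ps' * UT u₂ q₂ := by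
  have hE0 : (E 0 : SL2 F) = 1 := by apply sl2_ext; simp [E, Matrix.one_fin_two]
  by_cases hdm : 0 < degree m
  · exact ⟨1, ps ++ [m], 1, 0,
      IsConst_one,
      by intro p hp; rcases List.mem_append.mp hp with h1 | h1;
         exact hps p h1; simp at h1; subst h1; exact ⟨hdm, hm⟩,
      by simp,
      by rw [C_append_singleton, one_mul, UT_one, mul_one]⟩
  · push_neg at hdm
    rcases List.eq_nil_or_concat ps with rfl | ⟨qs, r, rfl⟩
    · exact ⟨E m * W, [], 1, 0, IsConst_EW hdm, by simp [GoodList], by simp,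
        by simp [C_nil, UT_one]⟩
    · simp only [List.concat_eq_append] at hps ⊢
      have hrd := hps r (by simp)
      by_cases hm0 : m = 0
      · refine ⟨Z, qs, 1, r, IsConst_Z, fun p hp => hps p (by simp [hp]), hrd.2, ?_⟩
        subst hm0
        calc C (qs ++ [r]) * (E 0 * W)
            = C qs * (E r * W) * W := by rw [C_append_singleton, hE0, one_mul]
          _ = C qs * (E r * (W * W)) := by simp only [mul_assoc]
          _ = C qs * (E r * Z) := by rw [W_mul_W]
          _ = C qs * (Z * E r) := by rw [Z_comm]
          _ = Z * C qs * UT 1 r := by rw [Z_mid, ← mul_assoc, E_eq_UT]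
      · have hdm0 : degree m = 0 := le_antisymm hdm (zero_le_degree_iff.mpr hm0)
        have hu : IsUnit (-m) := isUnit_iff_degree_eq_zero.mpr (by rwa [degree_neg])
        have hsval : ((hu.unit : (Polynomial F)ˣ) : Polynomial F) = -m := hu.unit_spec
        set s := hu.unit with hs
        have hdeg' : degree (r + ((s⁻¹ : (Polynomial F)ˣ) : Polynomial F)) = degree r :=
          degree_add_eq_left_of_degree_lt (by rw [degree_coe_units]; exact hrd.1)
        refine ⟨Z, qs ++ [r + ((s⁻¹ : (Polynomial F)ˣ) : Polynomial F)], -s, -1, IsConst_Z, ?_, ?_, ?_⟩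
        · intro p hp
          rcases List.mem_append.mp hp with h1 | h1
          · exact hps p (by simp [h1])
          · simp only [List.mem_singleton] at h1; subst h1
            rw [hdeg']; exact hrd
        · rw [degree_neg, degree_one]
          exact_mod_cast Nat.zero_le N
        · have id6'' : E r * LT ((s : Polynomial F)) =
              E (r + ((s⁻¹ : (Polynomial F)ˣ) : Polynomial F)) * (W * UT (-s) (-1)) := by
            rw [id6, ← E_eq_UT, mul_assoc]
          calc C (qs ++ [r]) * (E m * W)
              = C qs * (E r * (W * (E m * W))) := by
                rw [C_append_singleton]; simp only [mul_assoc]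
            _ = C qs * (E r * (Z * LT (-m))) := by
                rw [show W * (E m * W) = W * E m * W from (mul_assoc _ _ _).symm, id5]
            _ = Z * (C qs * (E r * LT (-m))) := by rw [Z_mid, Z_mid]
            _ = Z * (C qs * (E (r + ((s⁻¹ : (Polynomial F)ˣ) : Polynomial F)) * (W * UT (-s) (-1)))) := by
                rw [← hsval, id6'']
            _ = Z * C (qs ++ [r + ((s⁻¹ : (Polynomial F)ˣ) : Polynomial F)]) * UT (-s) (-1) := by
                rw [C_append_singleton]; simp only [mul_assoc]


lemma GoodList_of_forall₂ {N : ℕ} {ps ps' : List (Polynomial F)}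
    (h : List.Forall₂ (fun a b => degree b = degree a) ps ps') (hps : GoodList N ps) :
    GoodList N ps' := by
  induction h with
  | nil => exact hps
  | @cons a b l₁ l₂ hab _ ih =>
    intro p hp
    rcases List.mem_cons.mp hp with rfl | hp'
    · rw [hab]; exact hps a (by simp)
    · exact ih (fun x hx => hps x (List.mem_cons_of_mem _ hx)) p hp'

lemma stepW {N : ℕ} {g : SL2 F} (hg : Q N g) : Q N (g * W) := by
  obtain ⟨h, ps, u, q, hh, hps, hq, rfl⟩ := hg
  obtain ⟨v, ps', hdeg, heq⟩ := push ps u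
  have hps' : GoodList N ps' := GoodList_of_forall₂ hdeg hps
  have hm : degree (((u⁻¹ : (Polynomial F)ˣ) : Polynomial F) * q) ≤ (N : ℕ) := by
    refine le_trans (degree_mul_le _ _) ?_
    rw [degree_coe_units]
    simpa using hq
  obtain ⟨h₀, ps'', u₂, q₂, hh₀, hps'', hq₂, hc⟩ := Core hps' hm
  refine ⟨h * UT v 0 * h₀, ps'', u₂, q₂,
    IsConst_mul (IsConst_mul hh (IsConst_UT0 v)) hh₀, hps'', hq₂, ?_⟩
  calc h * C ps * UT u q * W
      = h * ((C ps * UT u 0) * (E (((u⁻¹ : (Polynomial F)ˣ) : Polynomial F) * q) * W)) := by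
        rw [id3 u q]; simp only [mul_assoc]
    _ = h * (UT v 0 * (C ps' * (E (((u⁻¹ : (Polynomial F)ˣ) : Polynomial F) * q) * W))) := by
        rw [heq]; simp only [mul_assoc]
    _ = h * (UT v 0 * (h₀ * C ps'' * UT u₂ q₂)) := by rw [hc]
    _ = h * UT v 0 * h₀ * C ps'' * UT u₂ q₂ := by simp only [mul_assoc]

lemma Q_of_mem_H {N : ℕ} {g : SL2 F} (hg : g ∈ H N) : Q N g := by
  have h2 : g ∈ (Subgroup.closure (T N)).toSubmonoid := hg
  rw [Subgroup.closure_toSubmonoid] at h2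
  obtain ⟨l, hl, rfl⟩ := Submonoid.exists_list_of_mem_closure h2
  clear hg h2
  induction l using List.reverseRecOn with
  | nil => exact Q_one N
  | append_singleton l x ih =>
    rw [List.prod_append, List.prod_singleton]
    have hQ : Q N l.prod := ih (fun y hy => hl y (List.mem_append_left _ hy))
    have hx := hl x (by simp)
    rcases hx with hx | hx
    · rcases hx with ⟨u, q, hq, rfl⟩ | rfl
      · exact stepUT hQ hq
      · exact stepW hQ
    · rw [Set.mem_inv] at hx
      rcases hx with ⟨u, q, hq, hxe⟩ | hxe
      · have : x = UT u⁻¹ (-q) := by rw [← id2, ← hxe, inv_inv]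
        subst this
        exact stepUT hQ (by rwa [degree_neg])
      · have hxw : x = W * Z := by
          have : x⁻¹ = W := hxe
          rw [← inv_inv x, this, W_inv]
        subst hxw
        rw [← mul_assoc]
        exact stepUT (stepW hQ) (by simp)


lemma EW_coe (p : Polynomial F) :
    ((E p * W : SL2 F) : Matrix (Fin 2) (Fin 2) (Polynomial F)) = !![-p, 1; -1, 0] := by
  simp only [Matrix.SpecialLinearGroup.coe_mul]
  simp [E, W, Matrix.SpecialLinearGroup.coe_mul, Matrix.mul_fin_two]

lemma C_deg {N : ℕ} : ∀ {ps : List (Polynomial F)}, ps ≠ [] → GoodList N ps →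
    (0 < degree (((C ps : SL2 F) : Matrix (Fin 2) (Fin 2) (Polynomial F)) 0 0) ∧
     degree (((C ps : SL2 F) : Matrix (Fin 2) (Fin 2) (Polynomial F)) 0 1) <
       degree (((C ps : SL2 F) : Matrix (Fin 2) (Fin 2) (Polynomial F)) 0 0) ∧
     degree (((C ps : SL2 F) : Matrix (Fin 2) (Fin 2) (Polynomial F)) 1 0) <
       degree (((C ps : SL2 F) : Matrix (Fin 2) (Fin 2) (Polynomial F)) 0 0) ∧
     degree (((C ps : SL2 F) : Matrix (Fin 2) (Fin 2) (Polynomial F)) 1 1) <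
       degree (((C ps : SL2 F) : Matrix (Fin 2) (Fin 2) (Polynomial F)) 0 0) ∧
     ((C ps : SL2 F) : Matrix (Fin 2) (Fin 2) (Polynomial F)) 1 0 ≠ 0) := by
  intro ps
  induction ps with
  | nil => intro h; exact absurd rfl h
  | cons p rest ih =>
    intro _ hgood
    have hp := hgood p (by simp)
    have hprest : GoodList N rest := fun x hx => hgood x (by simp [hx])
    have hpne : degree p ≠ ⊥ := by
      intro hb
      rw [hb] at hp
      exact WithBot.not_lt_bot _ hp.1
    rcases eq_or_ne rest [] with rfl | hne
    · have hc : ((C [p] : SL2 F) : Matrix (Fin 2) (Fin 2) (Polynomial F)) = !![-p, 1; -1, 0] := by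
        rw [show (C [p] : SL2 F) = E p * W by simp [C, C_cons]]
        exact EW_coe p
      have hbot : (⊥ : WithBot ℕ) < degree p := lt_of_le_of_lt bot_le hp.1
      rw [hc]
      refine ⟨?_, ?_, ?_, ?_, ?_⟩ <;> simp [degree_neg] <;>
        first
          | exact hp.1
          | exact hbot
    · obtain ⟨h00, h01, h10, h11, hc0⟩ := ih hne hprest
      set M := ((C rest : SL2 F) : Matrix (Fin 2) (Fin 2) (Polynomial F)) with hM
      have hMne : degree (M 0 0) ≠ ⊥ := by
        intro hb
        rw [hb] at h00
        exact WithBot.not_lt_bot _ h00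
      have e00 : ((C (p :: rest) : SL2 F) : Matrix (Fin 2) (Fin 2) (Polynomial F)) 0 0 =
          -p * M 0 0 + M 1 0 := by
        rw [C_cons, Matrix.SpecialLinearGroup.coe_mul, EW_coe]
        simp [Matrix.mul_apply, Fin.sum_univ_two]
        rfl
      have e01 : ((C (p :: rest) : SL2 F) : Matrix (Fin 2) (Fin 2) (Polynomial F)) 0 1 =
          -p * M 0 1 + M 1 1 := by
        rw [C_cons, Matrix.SpecialLinearGroup.coe_mul, EW_coe]
        simp [Matrix.mul_apply, Fin.sum_univ_two]
        rfl
      have e10 : ((C (p :: rest) : SL2 F) : Matrix (Fin 2) (Fin 2) (Polynomial F)) 1 0 =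
          -(M 0 0) := by
        rw [C_cons, Matrix.SpecialLinearGroup.coe_mul, EW_coe]
        simp [Matrix.mul_apply, Fin.sum_univ_two]
        rfl
      have e11 : ((C (p :: rest) : SL2 F) : Matrix (Fin 2) (Fin 2) (Polynomial F)) 1 1 =
          -(M 0 1) := by
        rw [C_cons, Matrix.SpecialLinearGroup.coe_mul, EW_coe]
        simp [Matrix.mul_apply, Fin.sum_univ_two]
        rfl
      have hdmul : degree (-p * M 0 0) = degree p + degree (M 0 0) := by
        rw [degree_mul, degree_neg]
      have hd00 : degree (((C (p :: rest) : SL2 F) : Matrix (Fin 2) (Fin 2) (Polynomial F)) 0 0) =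
          degree p + degree (M 0 0) := by
        rw [e00, degree_add_eq_left_of_degree_lt, hdmul]
        rw [hdmul]
        exact lt_of_lt_of_le h10 (le_add_of_nonneg_left (le_of_lt hp.1))
      refine ⟨?_, ?_, ?_, ?_, ?_⟩
      · rw [hd00]
        exact lt_of_lt_of_le hp.1 (le_add_of_nonneg_right (le_of_lt h00))
      · rw [hd00, e01]
        refine lt_of_le_of_lt (degree_add_le _ _) (max_lt ?_ ?_)
        · refine lt_of_le_of_lt (degree_mul_le _ _) ?_
          rw [degree_neg]
          exact WithBot.add_lt_add_left hpne h01
        · exact lt_of_lt_of_le h11 (le_add_of_nonneg_left (le_of_lt hp.1))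
      · rw [hd00, e10, degree_neg]
        calc degree (M 0 0) = 0 + degree (M 0 0) := (zero_add _).symm
          _ < degree p + degree (M 0 0) := WithBot.add_lt_add_right hMne hp.1
      · rw [hd00, e11, degree_neg]
        refine lt_trans h01 ?_
        calc degree (M 0 0) = 0 + degree (M 0 0) := (zero_add _).symm
          _ < degree p + degree (M 0 0) := WithBot.add_lt_add_right hMne hp.1
      · rw [e10, neg_ne_zero]
        exact zero_le_degree_iff.mp (le_of_lt h00)


lemma key {N : ℕ} {g : SL2 F} (hg : g ∈ H N)
    (h0 : ((g : Matrix (Fin 2) (Fin 2) (Polynomial F)) 1 0) = 0) :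
    degree ((g : Matrix (Fin 2) (Fin 2) (Polynomial F)) 0 1) ≤ (N : ℕ) := by
  obtain ⟨h, ps, u, q, hh, hps, hq, rfl⟩ := Q_of_mem_H hg
  set Hm := ((h : SL2 F) : Matrix (Fin 2) (Fin 2) (Polynomial F)) with hHm
  set M := ((C ps : SL2 F) : Matrix (Fin 2) (Fin 2) (Polynomial F)) with hMM
  have e10 : ((h * C ps * UT u q : SL2 F) : Matrix (Fin 2) (Fin 2) (Polynomial F)) 1 0 =
      (Hm 1 0 * M 0 0 + Hm 1 1 * M 1 0) * (u : Polynomial F) := by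
    simp only [Matrix.SpecialLinearGroup.coe_mul]
    simp [Matrix.SpecialLinearGroup.coe_mul, Matrix.mul_apply, Fin.sum_univ_two, UT]
    rfl
  have e01 : ((h * C ps * UT u q : SL2 F) : Matrix (Fin 2) (Fin 2) (Polynomial F)) 0 1 =
      (Hm 0 0 * M 0 0 + Hm 0 1 * M 1 0) * q +
      (Hm 0 0 * M 0 1 + Hm 0 1 * M 1 1) * ((u⁻¹ : (Polynomial F)ˣ) : Polynomial F) := by
    simp only [Matrix.SpecialLinearGroup.coe_mul]
    simp [Matrix.SpecialLinearGroup.coe_mul, Matrix.mul_apply, Fin.sum_univ_two, UT]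
    rfl
  rcases eq_or_ne ps [] with rfl | hne
  · have hconstC : ∀ i j, degree (M i j) ≤ 0 := by
      rw [hMM, C_nil]; exact IsConst_one
    have hc1 : degree (Hm 0 0 * M 0 0 + Hm 0 1 * M 1 0) ≤ 0 :=
      le_trans (degree_add_le _ _) (max_le
        (le_trans (degree_mul_le _ _) (by simpa using add_le_add (hh 0 0) (hconstC 0 0)))
        (le_trans (degree_mul_le _ _) (by simpa using add_le_add (hh 0 1) (hconstC 1 0))))
    have hc2 : degree (Hm 0 0 * M 0 1 + Hm 0 1 * M 1 1) ≤ 0 :=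
      le_trans (degree_add_le _ _) (max_le
        (le_trans (degree_mul_le _ _) (by simpa using add_le_add (hh 0 0) (hconstC 0 1)))
        (le_trans (degree_mul_le _ _) (by simpa using add_le_add (hh 0 1) (hconstC 1 1))))
    rw [e01]
    refine le_trans (degree_add_le _ _) (max_le ?_ ?_)
    · refine le_trans (degree_mul_le _ _) ?_
      refine le_trans (add_le_add hc1 hq) ?_
      simp
    · refine le_trans (degree_mul_le _ _) ?_
      rw [degree_coe_units]
      refine le_trans (add_le_add hc2 le_rfl) ?_
      simp
  · exfalso
    obtain ⟨h00, h01, h10, h11, hc0⟩ := C_deg hne hps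
    rw [e10, mul_eq_zero] at h0
    rcases h0 with h0 | h0
    swap
    · exact Units.ne_zero u h0
    have hdet : Hm 0 0 * Hm 1 1 - Hm 0 1 * Hm 1 0 = 1 := by
      have := h.2
      rwa [Matrix.det_fin_two] at this
    rcases eq_or_ne (Hm 1 0) 0 with hz | hz
    · rw [hz, zero_mul, zero_add, mul_eq_zero] at h0
      rcases h0 with h0 | h0
      · rw [hz, mul_zero, sub_zero] at hdet
        rw [h0, mul_zero] at hdet
        exact zero_ne_one hdet
      · exact hc0 h0
    · have hdz : degree (Hm 1 0) = 0 :=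
        le_antisymm (hh 1 0) (zero_le_degree_iff.mpr hz)
      have heq : Hm 1 0 * M 0 0 = -(Hm 1 1 * M 1 0) := by linear_combination h0
      have hlhs : degree (Hm 1 0 * M 0 0) = degree (M 0 0) := by
        rw [degree_mul, hdz, zero_add]
      have hrhs : degree (-(Hm 1 1 * M 1 0)) ≤ degree (M 1 0) := by
        rw [degree_neg]
        refine le_trans (degree_mul_le _ _) ?_
        calc degree (Hm 1 1) + degree (M 1 0) ≤ 0 + degree (M 1 0) :=
              add_le_add_left (hh 1 1) _
          _ = degree (M 1 0) := zero_add _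
      rw [heq] at hlhs
      rw [hlhs] at hrhs
      exact absurd hrhs (not_le.mpr h10)


lemma UT_mem {N : ℕ} (u : (Polynomial F)ˣ) (q : Polynomial F) (hq : degree q ≤ (N : ℕ)) :
    UT u q ∈ H N := Subgroup.subset_closure (Or.inl ⟨u, q, hq, rfl⟩)

lemma W_mem {N : ℕ} : (W : SL2 F) ∈ H N := Subgroup.subset_closure (Or.inr rfl)

lemma E_mem {N : ℕ} (p : Polynomial F) (hp : degree p ≤ (N : ℕ)) : E p ∈ H N := by
  rw [E_eq_UT]; exact UT_mem 1 p hp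

lemma H_mono {N M : ℕ} (h : N ≤ M) : (H N : Subgroup (SL2 F)) ≤ H M := by
  apply Subgroup.closure_mono
  rintro x (⟨u, q, hq, rfl⟩ | hx)
  · exact Or.inl ⟨u, q, le_trans hq (by exact_mod_cast h), rfl⟩
  · exact Or.inr hx

lemma mem_of_c_eq_zero (g : SL2 F)
    (h0 : ((g : Matrix (Fin 2) (Fin 2) (Polynomial F)) 1 0) = 0) : ∃ N, g ∈ H N := by
  have hdet : (g : Matrix (Fin 2) (Fin 2) (Polynomial F)) 0 0 *
      (g : Matrix (Fin 2) (Fin 2) (Polynomial F)) 1 1 = 1 := by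
    have h2 := g.2
    rw [Matrix.det_fin_two] at h2
    rw [h0, mul_zero, sub_zero] at h2
    exact h2
  refine ⟨((g : Matrix (Fin 2) (Fin 2) (Polynomial F)) 0 1).natDegree, ?_⟩
  have hgeq : g = UT ⟨(g : Matrix (Fin 2) (Fin 2) (Polynomial F)) 0 0,
      (g : Matrix (Fin 2) (Fin 2) (Polynomial F)) 1 1, hdet, by rw [mul_comm]; exact hdet⟩
      ((g : Matrix (Fin 2) (Fin 2) (Polynomial F)) 0 1) := by
    apply sl2_ext
    ext i j
    fin_cases i <;> fin_cases j <;> simp [UT, h0]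
  rw [hgeq]
  exact UT_mem _ _ degree_le_natDegree

lemma exists_mem_H_aux : ∀ (n : ℕ) (g : SL2 F),
    ((g : Matrix (Fin 2) (Fin 2) (Polynomial F)) 1 0).natDegree ≤ n → ∃ N, g ∈ H N := by
  intro n
  induction n using Nat.strong_induction_on with
  | _ n ih =>
    intro g hdeg
    by_cases h0 : ((g : Matrix (Fin 2) (Fin 2) (Polynomial F)) 1 0) = 0
    · exact mem_of_c_eq_zero g h0
    set c : Polynomial F := (g : Matrix (Fin 2) (Fin 2) (Polynomial F)) 1 0 with hc
    set a : Polynomial F := (g : Matrix (Fin 2) (Fin 2) (Polynomial F)) 0 0 with ha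
    have hcm : (c * Polynomial.C c.leadingCoeff⁻¹).Monic := monic_mul_leadingCoeff_inv h0
    set cm := c * Polynomial.C c.leadingCoeff⁻¹ with hcmdef
    set r := a %ₘ cm with hr
    set Qp := Polynomial.C c.leadingCoeff⁻¹ * (a /ₘ cm) with hQp
    have har : a + -Qp * c = r := by
      have hmd := modByMonic_add_div a cm
      rw [← hmd]
      rw [hcmdef, hQp]
      ring
    set g' := W * (E (-Qp) * g) with hg'def
    have hg'10 : ((g' : Matrix (Fin 2) (Fin 2) (Polynomial F)) 1 0) = -r := by
      rw [hg'def, ← har]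
      simp only [Matrix.SpecialLinearGroup.coe_mul]
      simp [Matrix.SpecialLinearGroup.coe_mul, Matrix.mul_apply, Fin.sum_univ_two, E, W,
        Matrix.vecMul, dotProduct, ← hc, ← ha]
    have hrlt : degree r < degree c := by
      have h1 : degree r < degree cm := degree_modByMonic_lt a hcm
      have h2 : degree cm = degree c := by
        rw [hcmdef, degree_mul, degree_C (inv_ne_zero (leadingCoeff_ne_zero.mpr h0)), add_zero]
      rwa [h2] at h1
    have hEx : ∃ N₁, g' ∈ H N₁ := by
      rcases eq_or_ne r 0 with hr0 | hr0
      · exact mem_of_c_eq_zero g' (by rw [hg'10, hr0, neg_zero])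
      · have hlt : r.natDegree < c.natDegree := natDegree_lt_natDegree hr0 hrlt
        refine ih r.natDegree (lt_of_lt_of_le hlt hdeg) g' ?_
        rw [hg'10, natDegree_neg]
    obtain ⟨N₁, hN₁⟩ := hEx
    have hback : g = (E (-Qp))⁻¹ * (W⁻¹ * g') := by
      rw [hg'def]
      simp [mul_assoc]
    refine ⟨max N₁ Qp.natDegree, ?_⟩
    rw [hback]
    refine Subgroup.mul_mem _ (Subgroup.inv_mem _ (E_mem _ ?_))
      (Subgroup.mul_mem _ (Subgroup.inv_mem _ W_mem) (H_mono (le_max_left _ _) hN₁))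
    rw [degree_neg]
    refine le_trans degree_le_natDegree ?_
    exact_mod_cast le_max_right N₁ Qp.natDegree

lemma exists_mem_H (g : SL2 F) : ∃ N, g ∈ H N :=
  exists_mem_H_aux _ g le_rfl

lemma not_fg : ¬ Group.FG (SL2 F) := by
  intro hFG
  obtain ⟨S, hStop, hSfin⟩ := Group.fg_iff.mp hFG
  choose f hf using fun g : SL2 F => exists_mem_H g
  set N := hSfin.toFinset.sup f with hN
  have hS : S ⊆ (H N : Subgroup (SL2 F)) := fun s hs =>
    H_mono (Finset.le_sup (hSfin.mem_toFinset.mpr hs)) (hf s)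
  have htop : (⊤ : Subgroup (SL2 F)) ≤ H N := by
    rw [← hStop]
    exact (Subgroup.closure_le _).mpr hS
  have hmem : E (Polynomial.X ^ (N + 1)) ∈ H N := htop (Subgroup.mem_top _)
  have h10 : ((E (Polynomial.X ^ (N + 1)) : SL2 F) :
      Matrix (Fin 2) (Fin 2) (Polynomial F)) 1 0 = 0 := by simp [E]
  have hkey := key hmem h10
  have h01 : ((E (Polynomial.X ^ (N + 1)) : SL2 F) :
      Matrix (Fin 2) (Fin 2) (Polynomial F)) 0 1 = Polynomial.X ^ (N + 1) := by simp [E]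
  rw [h01, degree_X_pow] at hkey
  have : N + 1 ≤ N := by exact_mod_cast hkey
  omega

end Nagao

/-- **Nagao's theorem.** For every finite field `F`, the group `SL₂(F[t])` of `2 × 2`
matrices of determinant `1` over the polynomial ring `F[t]` is not finitely
generated. -/
theorem sl2_polynomial_not_finitely_generated (F : Type*) [Field F] [Finite F] :
    ¬ Group.FG (Matrix.SpecialLinearGroup (Fin 2) (Polynomial F)) := by
  exact Nagao.not_fg
end

section
/- Every finite group is involved in SL(2,ℤ): for every finite group H, there exist a finite-index subgroup K of SL(2,ℤ) and a surjective group homomorphism from K onto H. -/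
open Matrix Subgroup Pointwise Equiv.Perm

local notation "SL2Z" => Matrix.SpecialLinearGroup (Fin 2) ℤ

namespace SL2ZInvolved

def A : SL2Z := ⟨!![1, 2; 0, 1], by simp [Matrix.det_fin_two_of]⟩
def B : SL2Z := ⟨!![1, 0; 2, 1], by simp [Matrix.det_fin_two_of]⟩

abbrev V := {v : Fin 2 → ℤ // v ≠ 0}

instance : SMul SL2Z V where
  smul g v := ⟨g.1.mulVec v.1, by
    intro h
    apply v.2
    calc v.1 = ((g⁻¹ * g : SL2Z) : Matrix (Fin 2) (Fin 2) ℤ).mulVec v.1 := by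
          rw [inv_mul_cancel]; simp
    _ = (g⁻¹ : SL2Z).1.mulVec (g.1.mulVec v.1) := by
          rw [Matrix.SpecialLinearGroup.coe_mul, ← Matrix.mulVec_mulVec]
    _ = 0 := by rw [h, Matrix.mulVec_zero]⟩

@[simp] lemma smul_coe (g : SL2Z) (v : V) : (g • v).1 = g.1.mulVec v.1 := rfl

instance : MulAction SL2Z V where
  one_smul v := Subtype.ext (by
    show ((1 : SL2Z) : Matrix (Fin 2) (Fin 2) ℤ).mulVec v.1 = v.1
    simp)
  mul_smul g h v := Subtype.ext (by
    show ((g * h : SL2Z) : Matrix (Fin 2) (Fin 2) ℤ).mulVec v.1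
        = (g : Matrix (Fin 2) (Fin 2) ℤ).mulVec ((h : Matrix (Fin 2) (Fin 2) ℤ).mulVec v.1)
    rw [Matrix.SpecialLinearGroup.coe_mul, ← Matrix.mulVec_mulVec])

lemma A_mulVec (w : Fin 2 → ℤ) :
    (A : Matrix (Fin 2) (Fin 2) ℤ).mulVec w = ![w 0 + 2 * w 1, w 1] := by
  funext i
  fin_cases i <;> simp [A, Matrix.mulVec, dotProduct, Fin.sum_univ_two] <;> ring

lemma Ainv_mulVec (w : Fin 2 → ℤ) :
    ((A⁻¹ : SL2Z) : Matrix (Fin 2) (Fin 2) ℤ).mulVec w = ![w 0 - 2 * w 1, w 1] := by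
  have : ((A⁻¹ : SL2Z) : Matrix (Fin 2) (Fin 2) ℤ) = !![1, -2; 0, 1] := by
    rw [Matrix.SpecialLinearGroup.coe_inv]
    simp [A, Matrix.adjugate_fin_two]
  funext i
  fin_cases i <;> simp [this, Matrix.mulVec, dotProduct, Fin.sum_univ_two] <;> ring

lemma B_mulVec (w : Fin 2 → ℤ) :
    (B : Matrix (Fin 2) (Fin 2) ℤ).mulVec w = ![w 0, w 1 + 2 * w 0] := by
  funext i
  fin_cases i <;> simp [B, Matrix.mulVec, dotProduct, Fin.sum_univ_two] <;> ring

lemma Binv_mulVec (w : Fin 2 → ℤ) :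
    ((B⁻¹ : SL2Z) : Matrix (Fin 2) (Fin 2) ℤ).mulVec w = ![w 0, w 1 - 2 * w 0] := by
  have : ((B⁻¹ : SL2Z) : Matrix (Fin 2) (Fin 2) ℤ) = !![1, 0; -2, 1] := by
    rw [Matrix.SpecialLinearGroup.coe_inv]
    simp [B, Matrix.adjugate_fin_two]
  funext i
  fin_cases i <;> simp [this, Matrix.mulVec, dotProduct, Fin.sum_univ_two] <;> ring

lemma V_ne (v : V) (h0 : v.1 0 = 0) (h1 : v.1 1 = 0) : False :=
  v.2 (funext fun i => by fin_cases i <;> simpa)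

/-- Ping-pong sets: positive attractors. -/
def PX : Fin 2 → Set V :=
  ![{v | 0 < v.1 0 * v.1 1 ∧ |v.1 1| < |v.1 0|} ∪ {v | v.1 1 = 0},
    {v | 0 < v.1 0 * v.1 1 ∧ |v.1 0| ≤ |v.1 1|} ∪ {v | v.1 0 = 0}]

/-- Ping-pong sets: negative attractors. -/
def PY : Fin 2 → Set V :=
  ![{v | v.1 0 * v.1 1 < 0 ∧ |v.1 1| ≤ |v.1 0|},
    {v | v.1 0 * v.1 1 < 0 ∧ |v.1 0| < |v.1 1|}]

lemma keyA {x y : ℤ} (hy : y ≠ 0) (h : 0 ≤ x * y ∨ |x| < |y|) :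
    0 < (x + 2 * y) * y ∧ |y| < |x + 2 * y| := by
  rcases lt_or_gt_of_ne hy with hy' | hy'
  · rcases h with h | h
    · have hx : x ≤ 0 := by nlinarith
      have hlt : x + 2 * y < 0 := by linarith
      rw [abs_of_neg hy', abs_of_neg hlt]
      exact ⟨by nlinarith, by linarith⟩
    · rw [abs_of_neg hy', abs_lt] at h
      have hlt : x + 2 * y < 0 := by linarith [h.2]
      rw [abs_of_neg hy', abs_of_neg hlt]
      exact ⟨by nlinarith [h.2], by linarith [h.1]⟩
  · rcases h with h | h
    · have hx : 0 ≤ x := by nlinarith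
      have hlt : 0 < x + 2 * y := by linarith
      rw [abs_of_pos hy', abs_of_pos hlt]
      exact ⟨by nlinarith, by linarith⟩
    · rw [abs_of_pos hy', abs_lt] at h
      have hlt : 0 < x + 2 * y := by linarith [h.1]
      rw [abs_of_pos hy', abs_of_pos hlt]
      exact ⟨by nlinarith [h.1], by linarith [h.2]⟩

lemma keyA' {x y : ℤ} (hy : y ≠ 0) (h : x * y ≤ 0 ∨ |x| ≤ |y|) :
    (x - 2 * y) * y < 0 ∧ |y| ≤ |x - 2 * y| := by
  rcases lt_or_gt_of_ne hy with hy' | hy'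
  · rcases h with h | h
    · have hx : 0 ≤ x := by nlinarith
      have hlt : 0 < x - 2 * y := by linarith
      rw [abs_of_neg hy', abs_of_pos hlt]
      exact ⟨by nlinarith, by linarith⟩
    · rw [abs_of_neg hy', abs_le] at h
      have hlt : 0 < x - 2 * y := by linarith [h.1]
      rw [abs_of_neg hy', abs_of_pos hlt]
      exact ⟨by nlinarith [h.1], by linarith [h.1]⟩
  · rcases h with h | h
    · have hx : x ≤ 0 := by nlinarith
      have hlt : x - 2 * y < 0 := by linarith
      rw [abs_of_pos hy', abs_of_neg hlt]
      exact ⟨by nlinarith, by linarith⟩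
    · rw [abs_of_pos hy', abs_le] at h
      have hlt : x - 2 * y < 0 := by linarith [h.2]
      rw [abs_of_pos hy', abs_of_neg hlt]
      exact ⟨by nlinarith [h.2], by linarith [h.2]⟩

lemma keyB {x y : ℤ} (hx : x ≠ 0) (h : 0 ≤ x * y ∨ |y| ≤ |x|) :
    0 < x * (y + 2 * x) ∧ |x| ≤ |y + 2 * x| := by
  rcases lt_or_gt_of_ne hx with hx' | hx'
  · rcases h with h | h
    · have hy : y ≤ 0 := by nlinarith
      have hlt : y + 2 * x < 0 := by linarith
      rw [abs_of_neg hx', abs_of_neg hlt]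
      exact ⟨by nlinarith, by linarith⟩
    · rw [abs_of_neg hx', abs_le] at h
      have hlt : y + 2 * x < 0 := by linarith [h.1]
      rw [abs_of_neg hx', abs_of_neg hlt]
      exact ⟨by nlinarith [h.1], by linarith [h.2]⟩
  · rcases h with h | h
    · have hy : 0 ≤ y := by nlinarith
      have hlt : 0 < y + 2 * x := by linarith
      rw [abs_of_pos hx', abs_of_pos hlt]
      exact ⟨by nlinarith, by linarith⟩
    · rw [abs_of_pos hx', abs_le] at h
      have hlt : 0 < y + 2 * x := by linarith [h.1]
      rw [abs_of_pos hx', abs_of_pos hlt]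
      exact ⟨by nlinarith [h.2], by linarith [h.1]⟩

lemma keyB' {x y : ℤ} (hx : x ≠ 0) (h : x * y ≤ 0 ∨ |y| < |x|) :
    x * (y - 2 * x) < 0 ∧ |x| < |y - 2 * x| := by
  rcases lt_or_gt_of_ne hx with hx' | hx'
  · rcases h with h | h
    · have hy : 0 ≤ y := by nlinarith
      have hlt : 0 < y - 2 * x := by linarith
      rw [abs_of_neg hx', abs_of_pos hlt]
      exact ⟨by nlinarith, by linarith⟩
    · rw [abs_of_neg hx', abs_lt] at h
      have hlt : 0 < y - 2 * x := by linarith [h.1]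
      rw [abs_of_neg hx', abs_of_pos hlt]
      exact ⟨by nlinarith [h.1], by linarith [h.2]⟩
  · rcases h with h | h
    · have hy : y ≤ 0 := by nlinarith
      have hlt : y - 2 * x < 0 := by linarith
      rw [abs_of_pos hx', abs_of_neg hlt]
      exact ⟨by nlinarith, by linarith⟩
    · rw [abs_of_pos hx', abs_lt] at h
      have hlt : y - 2 * x < 0 := by linarith [h.2]
      rw [abs_of_pos hx', abs_of_neg hlt]
      exact ⟨by nlinarith [h.2], by linarith [h.1]⟩


lemma lift_injective : Function.Injective ⇑(FreeGroup.lift ![A, B]) := by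
  apply FreeGroup.injective_lift_of_ping_pong ![A, B] PX PY
  · -- nonempty
    intro i
    fin_cases i
    · exact ⟨⟨![1, 0], fun h => by simpa using congrFun h 0⟩, Or.inr (by simp [PX])⟩
    · exact ⟨⟨![0, 1], fun h => by simpa using congrFun h 1⟩, Or.inr (by simp [PX])⟩
  · -- X pairwise disjoint
    intro i j hij
    fin_cases i <;> fin_cases j <;> first
      | exact absurd rfl hij
      | (apply Set.disjoint_left.mpr
         rintro v (⟨h1, h2⟩ | h) (⟨h3, h4⟩ | h') <;>
           first
             | linarith
             | (exact V_ne v h' h)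
             | (exact V_ne v h h')
             | (rw [h'] at h1; simp at h1)
             | (rw [h] at h3; simp at h3)
             | (rw [h'] at h3; simp at h3)
             | (rw [h] at h1; simp at h1))
  · -- Y pairwise disjoint
    intro i j hij
    fin_cases i <;> fin_cases j <;> first
      | exact absurd rfl hij
      | (apply Set.disjoint_left.mpr
         rintro v ⟨h1, h2⟩ ⟨h3, h4⟩
         linarith)
  · -- X vs Y disjoint
    intro i j
    fin_cases i <;> fin_cases j <;>
      (apply Set.disjoint_left.mpr
       rintro v (⟨h1, h2⟩ | h) ⟨h3, h4⟩ <;>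
         first
           | linarith
           | (rw [h] at h3; simp at h3))
  · -- hX
    intro i
    fin_cases i
    · rintro u hu
      rw [Set.mem_smul_set] at hu
      obtain ⟨v, hv, rfl⟩ := hu
      simp only [PY, Set.mem_compl_iff, Set.mem_setOf_eq, Fin.mk_zero, Fin.mk_one, Matrix.cons_val_zero, Set.mem_setOf_eq, not_and, not_le] at hv
      show _ ∈ PX 0
      rcases eq_or_ne (v.1 1) 0 with h0 | h0
      · right
        show (_ • v).1 1 = 0
        rw [smul_coe]
        show (![A, B] 0 : SL2Z).1.mulVec v.1 1 = 0
        rw [show (![A, B] 0 : SL2Z) = A from rfl, A_mulVec]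
        simp [h0]
      · left
        have hk := keyA h0 (by
          rcases lt_or_ge (v.1 0 * v.1 1) 0 with h | h
          · exact Or.inr (hv h)
          · exact Or.inl h)
        constructor
        · show 0 < (_ • v).1 0 * (_ • v).1 1
          rw [smul_coe]
          show 0 < ((![A, B] 0 : SL2Z).1.mulVec v.1 0) * ((![A, B] 0 : SL2Z).1.mulVec v.1 1)
          rw [show (![A, B] 0 : SL2Z) = A from rfl, A_mulVec]
          simpa using hk.1
        · show |(_ • v).1 1| < |(_ • v).1 0|
          rw [smul_coe]
          show |(![A, B] 0 : SL2Z).1.mulVec v.1 1| < |(![A, B] 0 : SL2Z).1.mulVec v.1 0|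
          rw [show (![A, B] 0 : SL2Z) = A from rfl, A_mulVec]
          simpa using hk.2
    · rintro u hu
      rw [Set.mem_smul_set] at hu
      obtain ⟨v, hv, rfl⟩ := hu
      simp only [PY, Set.mem_compl_iff, Set.mem_setOf_eq, Fin.mk_zero, Fin.mk_one, Matrix.cons_val_one, Matrix.head_cons, Matrix.cons_val_zero, Set.mem_setOf_eq, not_and,
        not_lt] at hv
      show _ ∈ PX 1
      rcases eq_or_ne (v.1 0) 0 with h0 | h0
      · right
        show (_ • v).1 0 = 0
        rw [smul_coe]
        show (![A, B] 1 : SL2Z).1.mulVec v.1 0 = 0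
        rw [show (![A, B] 1 : SL2Z) = B from rfl, B_mulVec]
        simp [h0]
      · left
        have hk := keyB h0 (by
          rcases lt_or_ge (v.1 0 * v.1 1) 0 with h | h
          · exact Or.inr (hv h)
          · exact Or.inl h)
        constructor
        · show 0 < (_ • v).1 0 * (_ • v).1 1
          rw [smul_coe]
          show 0 < ((![A, B] 1 : SL2Z).1.mulVec v.1 0) * ((![A, B] 1 : SL2Z).1.mulVec v.1 1)
          rw [show (![A, B] 1 : SL2Z) = B from rfl, B_mulVec]
          simpa using hk.1
        · show |(_ • v).1 0| ≤ |(_ • v).1 1|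
          rw [smul_coe]
          show |(![A, B] 1 : SL2Z).1.mulVec v.1 0| ≤ |(![A, B] 1 : SL2Z).1.mulVec v.1 1|
          rw [show (![A, B] 1 : SL2Z) = B from rfl, B_mulVec]
          simpa using hk.2
  · -- hY
    intro i
    fin_cases i
    · rintro u hu
      rw [Set.mem_smul_set] at hu
      obtain ⟨v, hv, rfl⟩ := hu
      simp only [PX, Set.mem_compl_iff, Set.mem_setOf_eq, Fin.mk_zero, Fin.mk_one, Matrix.cons_val_zero, Set.mem_union, Set.mem_setOf_eq, not_or, not_and,
        not_lt] at hv
      obtain ⟨hv1, hv2⟩ := hv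
      have hk := keyA' hv2 (by
        rcases lt_or_ge 0 (v.1 0 * v.1 1) with h | h
        · exact Or.inr (hv1 h)
        · exact Or.inl h)
      show _ ∈ PY 0
      constructor
      · show (_ • v).1 0 * (_ • v).1 1 < 0
        show ((![A, B]⁻¹ 0 : SL2Z).1.mulVec v.1 0) * ((![A, B]⁻¹ 0 : SL2Z).1.mulVec v.1 1) < 0
        have : (![A, B]⁻¹ 0 : SL2Z) = A⁻¹ := by simp
        rw [this, Ainv_mulVec]
        simpa using hk.1
      · show |(_ • v).1 1| ≤ |(_ • v).1 0|
        show |(![A, B]⁻¹ 0 : SL2Z).1.mulVec v.1 1| ≤ |(![A, B]⁻¹ 0 : SL2Z).1.mulVec v.1 0|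
        have : (![A, B]⁻¹ 0 : SL2Z) = A⁻¹ := by simp
        rw [this, Ainv_mulVec]
        simpa using hk.2
    · rintro u hu
      rw [Set.mem_smul_set] at hu
      obtain ⟨v, hv, rfl⟩ := hu
      simp only [PX, Set.mem_compl_iff, Set.mem_setOf_eq, Fin.mk_zero, Fin.mk_one, Matrix.cons_val_one, Matrix.head_cons, Matrix.cons_val_zero, Set.mem_union, Set.mem_setOf_eq,
        not_or, not_and, not_le] at hv
      obtain ⟨hv1, hv2⟩ := hv
      have hk := keyB' hv2 (by
        rcases lt_or_ge 0 (v.1 0 * v.1 1) with h | h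
        · exact Or.inr (hv1 h)
        · exact Or.inl h)
      show _ ∈ PY 1
      constructor
      · show (_ • v).1 0 * (_ • v).1 1 < 0
        show ((![A, B]⁻¹ 1 : SL2Z).1.mulVec v.1 0) * ((![A, B]⁻¹ 1 : SL2Z).1.mulVec v.1 1) < 0
        have : (![A, B]⁻¹ 1 : SL2Z) = B⁻¹ := by simp
        rw [this, Binv_mulVec]
        simpa using hk.1
      · show |(_ • v).1 0| < |(_ • v).1 1|
        show |(![A, B]⁻¹ 1 : SL2Z).1.mulVec v.1 0| < |(![A, B]⁻¹ 1 : SL2Z).1.mulVec v.1 1|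
        have : (![A, B]⁻¹ 1 : SL2Z) = B⁻¹ := by simp
        rw [this, Binv_mulVec]
        simpa using hk.2


def J : SL2Z := ⟨!![-1, 0; 0, -1], by norm_num [Matrix.det_fin_two_of]⟩

noncomputable def S : Subgroup SL2Z := (FreeGroup.lift ![A, B]).range

lemma A_mem : A ∈ S := ⟨FreeGroup.of 0, by simp⟩
lemma B_mem : B ∈ S := ⟨FreeGroup.of 1, by simp⟩

def U (k : ℤ) : SL2Z := ⟨!![1, 2 * k; 0, 1], by simp [Matrix.det_fin_two_of]⟩
def L (k : ℤ) : SL2Z := ⟨!![1, 0; 2 * k, 1], by simp [Matrix.det_fin_two_of]⟩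

lemma U_eq (k : ℤ) : U k = A ^ k := by
  induction k using Int.induction_on with
  | zero => ext i j; fin_cases i <;> fin_cases j <;> simp [U]
  | succ n ih =>
      rw [_root_.zpow_add, zpow_one, ← ih]
      ext i j
      rw [Matrix.SpecialLinearGroup.coe_mul]
      fin_cases i <;> fin_cases j <;>
        simp [U, A, Matrix.mul_apply, Fin.sum_univ_two] <;> ring
  | pred n ih =>
      rw [sub_eq_add_neg, _root_.zpow_add, ← ih, _root_.zpow_neg_one]
      have hAinv : ((A⁻¹ : SL2Z) : Matrix (Fin 2) (Fin 2) ℤ) = !![1, -2; 0, 1] := by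
        rw [Matrix.SpecialLinearGroup.coe_inv]
        simp [A, Matrix.adjugate_fin_two]
      ext i j
      rw [Matrix.SpecialLinearGroup.coe_mul, hAinv]
      fin_cases i <;> fin_cases j <;>
        simp [U, Matrix.mul_apply, Fin.sum_univ_two] <;> ring

lemma L_eq (k : ℤ) : L k = B ^ k := by
  induction k using Int.induction_on with
  | zero => ext i j; fin_cases i <;> fin_cases j <;> simp [L]
  | succ n ih =>
      rw [_root_.zpow_add, zpow_one, ← ih]
      ext i j
      rw [Matrix.SpecialLinearGroup.coe_mul]
      fin_cases i <;> fin_cases j <;>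
        simp [L, B, Matrix.mul_apply, Fin.sum_univ_two] <;> ring
  | pred n ih =>
      rw [sub_eq_add_neg, _root_.zpow_add, ← ih, _root_.zpow_neg_one]
      have hBinv : ((B⁻¹ : SL2Z) : Matrix (Fin 2) (Fin 2) ℤ) = !![1, 0; -2, 1] := by
        rw [Matrix.SpecialLinearGroup.coe_inv]
        simp [B, Matrix.adjugate_fin_two]
      ext i j
      rw [Matrix.SpecialLinearGroup.coe_mul, hBinv]
      fin_cases i <;> fin_cases j <;>
        simp [L, Matrix.mul_apply, Fin.sum_univ_two] <;> ring

lemma U_mem (k : ℤ) : U k ∈ S := by rw [U_eq]; exact zpow_mem A_mem k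
lemma L_mem (k : ℤ) : L k ∈ S := by rw [L_eq]; exact zpow_mem B_mem k

lemma J_comm (X : SL2Z) : J * X = X * J := by
  ext i j
  rw [Matrix.SpecialLinearGroup.coe_mul, Matrix.SpecialLinearGroup.coe_mul]
  fin_cases i <;> fin_cases j <;>
    simp [J, Matrix.mul_apply, Fin.sum_univ_two] <;> ring

lemma J_mul_J : J * J = 1 := by
  ext i j
  rw [Matrix.SpecialLinearGroup.coe_mul]
  fin_cases i <;> fin_cases j <;>
    simp [J, Matrix.mul_apply, Fin.sum_univ_two]

/-- Division with small remainder: for `c ≠ 0` we can reduce `a` modulo `2c`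
to something of absolute value at most `|c|`. -/
lemma exists_reduction (a c : ℤ) (hc : c ≠ 0) : ∃ q : ℤ, (a - 2 * c * q).natAbs ≤ c.natAbs := by
  have main : ∀ c : ℤ, 0 < c → ∀ a : ℤ, ∃ q : ℤ, |a - 2 * c * q| ≤ c := by
    intro c hc a
    refine ⟨(a + c) / (2 * c), ?_⟩
    have h2c : (0:ℤ) < 2 * c := by linarith
    have h := Int.mul_ediv_add_emod (a + c) (2 * c)
    have h1 := Int.emod_nonneg (a + c) (by linarith : (2:ℤ) * c ≠ 0)
    have h2 := Int.emod_lt_of_pos (a + c) h2c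
    rw [abs_le]
    constructor <;> linarith
  rcases lt_or_gt_of_ne hc with hc' | hc'
  · obtain ⟨q, hq⟩ := main (-c) (by linarith) a
    refine ⟨-q, ?_⟩
    have he : a - 2 * c * -q = a - 2 * -c * q := by ring
    rw [he]
    obtain ⟨h1, h2⟩ := abs_le.mp hq
    omega
  · obtain ⟨q, hq⟩ := main c hc' a
    refine ⟨q, ?_⟩
    obtain ⟨h1, h2⟩ := abs_le.mp hq
    omega

lemma descent : ∀ n : ℕ, ∀ M : SL2Z,
    (M.1 0 0).natAbs + (M.1 1 0).natAbs ≤ n →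
    Odd (M.1 0 0) → Even (M.1 0 1) → Even (M.1 1 0) → Odd (M.1 1 1) →
    M ∈ S ∨ J * M ∈ S := by
  intro n
  induction n using Nat.strong_induction_on with
  | _ n ih =>
  intro M hle ha hb hc hd
  by_cases hc0 : M.1 1 0 = 0
  · -- base case: upper triangular
    have hdet : M.1 0 0 * M.1 1 1 - M.1 0 1 * M.1 1 0 = 1 := by
      have h2 := M.2
      rwa [Matrix.det_fin_two] at h2
    have had : M.1 0 0 * M.1 1 1 = 1 := by rw [hc0] at hdet; linarith
    obtain ⟨k, hk⟩ := hb
    rcases Int.mul_eq_one_iff_eq_one_or_neg_one.mp had with ⟨ha1, hd1⟩ | ⟨ha1, hd1⟩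
    · left
      have hM : M = U k := by
        ext i j
        fin_cases i <;> fin_cases j <;> simp [U, ha1, hd1, hc0, hk] <;> omega
      rw [hM]; exact U_mem k
    · right
      have hM : J * M = U (-k) := by
        ext i j
        rw [Matrix.SpecialLinearGroup.coe_mul]
        fin_cases i <;> fin_cases j <;>
          simp [J, U, Matrix.mul_apply, Fin.sum_univ_two, ha1, hd1, hc0, hk] <;> omega
      rw [hM]; exact U_mem (-k)
  · -- inductive step
    have hane : M.1 0 0 ≠ 0 := by
      intro h0
      rw [h0] at ha
      exact (Int.not_odd_iff_even.mpr Even.zero) ha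
    have h1 : (M.1 0 0).natAbs % 2 = 1 := Nat.odd_iff.mp (Int.natAbs_odd.mpr ha)
    have h2 : (M.1 1 0).natAbs % 2 = 0 := Nat.even_iff.mp (Int.natAbs_even.mpr hc)
    rcases Nat.lt_or_ge (M.1 1 0).natAbs (M.1 0 0).natAbs with hlt | hge
    · -- reduce the top-left entry
      obtain ⟨q, hq⟩ := exists_reduction (M.1 0 0) (M.1 1 0) hc0
      set M' : SL2Z := U (-q) * M with hM'def
      have hM' : M'.1 = !![M.1 0 0 - 2 * M.1 1 0 * q, M.1 0 1 - 2 * M.1 1 1 * q;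
          M.1 1 0, M.1 1 1] := by
        rw [hM'def, Matrix.SpecialLinearGroup.coe_mul]
        ext i j
        fin_cases i <;> fin_cases j <;>
          simp [U, Matrix.mul_apply, Fin.sum_univ_two] <;> ring
      have hmn : (M'.1 0 0).natAbs + (M'.1 1 0).natAbs < n := by
        have e00 := congrFun (congrFun hM' 0) 0
        have e10 := congrFun (congrFun hM' 1) 0
        simp at e00 e10
        omega
      have hrec := ih _ hmn M' le_rfl
        (by rw [hM']; first | exact ha.sub_even ⟨M.1 1 0 * q, by ring⟩ | simpa using ha.sub_even ⟨M.1 1 0 * q, by ring⟩)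
        (by rw [hM']; first | exact hb.sub ⟨M.1 1 1 * q, by ring⟩ | simpa using hb.sub ⟨M.1 1 1 * q, by ring⟩)
        (by rw [hM']; first | exact hc | simpa using hc)
        (by rw [hM']; first | exact hd | simpa using hd)
      have hUU : U q * U (-q) = 1 := by
        rw [U_eq, U_eq, ← _root_.zpow_add, add_neg_cancel, zpow_zero]
      have hMeq : M = U q * M' := by
        rw [hM'def, ← mul_assoc, hUU, one_mul]
      rcases hrec with h | h
      · left; rw [hMeq]; exact mul_mem (U_mem q) h
      · right
        have : J * M = U q * (J * M') := by
          rw [hMeq, ← mul_assoc, J_comm (U q), mul_assoc]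
        rw [this]; exact mul_mem (U_mem q) h
    · -- reduce the bottom-left entry
      have hlt' : (M.1 0 0).natAbs < (M.1 1 0).natAbs := by omega
      obtain ⟨q, hq⟩ := exists_reduction (M.1 1 0) (M.1 0 0) hane
      set M' : SL2Z := L (-q) * M with hM'def
      have hM' : M'.1 = !![M.1 0 0, M.1 0 1;
          M.1 1 0 - 2 * M.1 0 0 * q, M.1 1 1 - 2 * M.1 0 1 * q] := by
        rw [hM'def, Matrix.SpecialLinearGroup.coe_mul]
        ext i j
        fin_cases i <;> fin_cases j <;>
          simp [L, Matrix.mul_apply, Fin.sum_univ_two] <;> ring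
      have hmn : (M'.1 0 0).natAbs + (M'.1 1 0).natAbs < n := by
        have e00 := congrFun (congrFun hM' 0) 0
        have e10 := congrFun (congrFun hM' 1) 0
        simp at e00 e10
        omega
      have hrec := ih _ hmn M' le_rfl
        (by rw [hM']; first | exact ha | simpa using ha)
        (by rw [hM']; first | exact hb | simpa using hb)
        (by rw [hM']; first | exact hc.sub ⟨M.1 0 0 * q, by ring⟩ | simpa using hc.sub ⟨M.1 0 0 * q, by ring⟩)
        (by rw [hM']; first | exact hd.sub_even ⟨M.1 0 1 * q, by ring⟩ | simpa using hd.sub_even ⟨M.1 0 1 * q, by ring⟩)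
      have hLL : L q * L (-q) = 1 := by
        rw [L_eq, L_eq, ← _root_.zpow_add, add_neg_cancel, zpow_zero]
      have hMeq : M = L q * M' := by
        rw [hM'def, ← mul_assoc, hLL, one_mul]
      rcases hrec with h | h
      · left; rw [hMeq]; exact mul_mem (L_mem q) h
      · right
        have : J * M = L q * (J * M') := by
          rw [hMeq, ← mul_assoc, J_comm (L q), mul_assoc]
        rw [this]; exact mul_mem (L_mem q) h

def redmap : SL2Z →* Matrix.SpecialLinearGroup (Fin 2) (ZMod 2) :=
  Matrix.SpecialLinearGroup.map (Int.castRingHom (ZMod 2))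

lemma zmod2_cast_eq_one {a : ℤ} (h : (a : ZMod 2) = 1) : Odd a := by
  rcases Int.even_or_odd a with he | ho
  · exfalso
    obtain ⟨r, hr⟩ := he
    rw [hr] at h
    push_cast at h
    have : (2 : ZMod 2) * (r : ZMod 2) = 0 := by
      have h2 : (2 : ZMod 2) = 0 := by decide
      rw [h2, zero_mul]
    rw [two_mul] at this
    rw [this] at h
    exact absurd h (by decide)
  · exact ho

lemma zmod2_cast_eq_zero {a : ℤ} (h : (a : ZMod 2) = 0) : Even a := by
  have := (ZMod.intCast_zmod_eq_zero_iff_dvd a 2).mp h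
  obtain ⟨r, hr⟩ := this; exact ⟨r, by omega⟩

lemma mem_ker_parity {M : SL2Z} (h : M ∈ redmap.ker) :
    Odd (M.1 0 0) ∧ Even (M.1 0 1) ∧ Even (M.1 1 0) ∧ Odd (M.1 1 1) := by
  rw [MonoidHom.mem_ker] at h
  have h' : (redmap M).1 = (1 : Matrix.SpecialLinearGroup (Fin 2) (ZMod 2)).1 := by rw [h]
  have hmap : (redmap M).1 = M.1.map (Int.castRingHom (ZMod 2)) := rfl
  rw [hmap, Matrix.SpecialLinearGroup.coe_one] at h'
  have he : ∀ i j, ((M.1 i j : ℤ) : ZMod 2) = (1 : Matrix (Fin 2) (Fin 2) (ZMod 2)) i j := by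
    intro i j
    have := congrFun (congrFun h' i) j
    simpa [Matrix.map_apply] using this
  refine ⟨zmod2_cast_eq_one ?_, zmod2_cast_eq_zero ?_, zmod2_cast_eq_zero ?_,
    zmod2_cast_eq_one ?_⟩
  · simpa [Matrix.one_apply] using he 0 0
  · simpa [Matrix.one_apply] using he 0 1
  · simpa [Matrix.one_apply] using he 1 0
  · simpa [Matrix.one_apply] using he 1 1

lemma A_ker : A ∈ redmap.ker := by
  rw [MonoidHom.mem_ker]
  ext i j
  fin_cases i <;> fin_cases j <;>
    simp [redmap, A, Matrix.SpecialLinearGroup.coe_one, Matrix.one_apply] <;> decide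

lemma B_ker : B ∈ redmap.ker := by
  rw [MonoidHom.mem_ker]
  ext i j
  fin_cases i <;> fin_cases j <;>
    simp [redmap, B, Matrix.SpecialLinearGroup.coe_one, Matrix.one_apply] <;> decide

lemma J_ker : J ∈ redmap.ker := by
  rw [MonoidHom.mem_ker]
  ext i j
  fin_cases i <;> fin_cases j <;>
    simp [redmap, J, Matrix.SpecialLinearGroup.coe_one, Matrix.one_apply] <;> decide

lemma S_le_ker : S ≤ redmap.ker := by
  rintro x ⟨w, rfl⟩
  have hcomp : redmap.comp (FreeGroup.lift ![A, B]) = 1 := by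
    apply FreeGroup.ext_hom
    intro i
    fin_cases i
    · simpa using MonoidHom.mem_ker.mp A_ker
    · simpa using MonoidHom.mem_ker.mp B_ker
  rw [MonoidHom.mem_ker, ← MonoidHom.comp_apply, hcomp]
  rfl

lemma finite_quot : Finite (redmap.ker ⧸ (S.subgroupOf redmap.ker)) := by
  apply Finite.of_surjective
    (f := fun b : Bool =>
      QuotientGroup.mk (s := S.subgroupOf redmap.ker)
        (if b then (1 : redmap.ker) else ⟨J, J_ker⟩))
  intro x
  refine QuotientGroup.induction_on x ?_
  intro M
  obtain ⟨h00, h01, h10, h11⟩ := mem_ker_parity M.2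
  rcases descent ((M.1.1 0 0).natAbs + (M.1.1 1 0).natAbs) M.1 le_rfl h00 h01 h10 h11
    with h | h
  · refine ⟨true, ?_⟩
    show QuotientGroup.mk (s := S.subgroupOf redmap.ker) (1 : redmap.ker) = QuotientGroup.mk M
    rw [QuotientGroup.eq]
    rw [Subgroup.mem_subgroupOf]
    simpa using h
  · refine ⟨false, ?_⟩
    show QuotientGroup.mk (s := S.subgroupOf redmap.ker) (⟨J, J_ker⟩ : redmap.ker)
        = QuotientGroup.mk M
    rw [QuotientGroup.eq]
    rw [Subgroup.mem_subgroupOf]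
    have hJinv : J⁻¹ = J := by
      have := J_mul_J
      exact (eq_inv_of_mul_eq_one_left this).symm
    have : (((⟨J, J_ker⟩ : redmap.ker)⁻¹ * M : redmap.ker) : SL2Z) = J⁻¹ * M.1 := rfl
    rw [this, hJinv]
    exact h

lemma S_index_ne_zero : S.index ≠ 0 := by
  have h1 : S.relIndex redmap.ker ≠ 0 := by
    have := finite_quot
    exact Subgroup.index_ne_zero_of_finite
  have h2 : redmap.ker.index ≠ 0 := Subgroup.FiniteIndex.index_ne_zero
  rw [← Subgroup.relIndex_mul_index S_le_ker]
  exact Nat.mul_ne_zero h1 h2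


end SL2ZInvolved

open SL2ZInvolved in
/-- Every finite group is involved in `SL(2, ℤ)`: for every finite group `H` there
are a finite-index subgroup `K ≤ SL(2, ℤ)` and a surjective group homomorphism
`K →* H`. -/
theorem finite_group_involved_in_SL2Z (H : Type*) [Group H] [Finite H] :
    ∃ K : Subgroup (Matrix.SpecialLinearGroup (Fin 2) ℤ),
      K.FiniteIndex ∧ ∃ f : K →* H, Function.Surjective f := by
  classical
  cases nonempty_fintype H
  set m := Fintype.card H with hm
  -- A two-generated symmetric group containing a copy of `H`
  set σ : Equiv.Perm (Fin (m + 2)) := finRotate (m + 2) with hσ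
  set τ : Equiv.Perm (Fin (m + 2)) := Equiv.swap 0 (σ 0) with hτ
  have hgen : Subgroup.closure ({σ, τ} : Set (Equiv.Perm (Fin (m + 2)))) = ⊤ :=
    Equiv.Perm.closure_cycle_adjacent_swap isCycle_finRotate support_finRotate 0
  set ψ0 : FreeGroup (Fin 2) →* Equiv.Perm (Fin (m + 2)) := FreeGroup.lift ![σ, τ] with hψ0def
  have hrange : Set.range ![σ, τ] = {σ, τ} := by
    ext x
    simp only [Set.mem_range, Fin.exists_fin_two, Matrix.cons_val_zero, Matrix.cons_val_one,
      Matrix.head_cons, Set.mem_insert_iff, Set.mem_singleton_iff, eq_comm]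
  have hψ0 : Function.Surjective ψ0 := by
    rw [← MonoidHom.range_eq_top, hψ0def, FreeGroup.range_lift_eq_closure, hrange, hgen]
  -- The free subgroup `S` of `SL(2,ℤ)`
  set e : FreeGroup (Fin 2) ≃* ↥S := MonoidHom.ofInjective lift_injective with hedef
  set ψ : ↥S →* Equiv.Perm (Fin (m + 2)) := ψ0.comp e.symm.toMonoidHom with hψdef
  have hψ : Function.Surjective ψ := by
    have := hψ0.comp e.symm.surjective
    simpa [hψdef, MonoidHom.coe_comp] using this
  -- Cayley embedding of `H`
  set emb : H ↪ Fin (m + 2) :=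
    (Fintype.equivFin H).toEmbedding.trans (Fin.castLEEmb (by omega)) with hembdef
  set ι : H →* Equiv.Perm (Fin (m + 2)) :=
    (Equiv.Perm.viaEmbeddingHom emb).comp (MulAction.toPermHom H H) with hιdef
  have hι : Function.Injective ι := by
    have h1 : Function.Injective (Equiv.Perm.viaEmbeddingHom emb) :=
      Equiv.Perm.viaEmbeddingHom_injective emb
    have h2 : Function.Injective (MulAction.toPermHom H H) := MulAction.toPerm_injective
    exact h1.comp h2
  -- The subgroup
  set K0 : Subgroup ↥S := Subgroup.comap ψ ι.range with hK0def
  set K : Subgroup SL2Z := K0.map S.subtype with hKdef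
  have hKS : K ≤ S := by
    rw [hKdef]
    simpa using Subgroup.map_subtype_le K0
  have hfin : K.FiniteIndex := by
    constructor
    rw [← Subgroup.relIndex_mul_index hKS]
    apply Nat.mul_ne_zero
    · have hK0 : K.subgroupOf S = K0 :=
        Subgroup.comap_map_eq_self_of_injective S.subtype_injective K0
      show (K.subgroupOf S).index ≠ 0
      rw [hK0, hK0def, Subgroup.index_comap_of_surjective _ hψ]
      exact Subgroup.index_ne_zero_of_finite
    · exact S_index_ne_zero
  have hmemK : ∀ x : ↥K, (ψ.comp (Subgroup.inclusion hKS)) x ∈ ι.range := by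
    rintro ⟨x, hx⟩
    rw [hKdef] at hx
    obtain ⟨s, hs, hseq⟩ := Subgroup.mem_map.mp hx
    have heq : Subgroup.inclusion hKS ⟨x, hx⟩ = s := by
      apply Subtype.ext
      simpa using hseq.symm
    show ψ (Subgroup.inclusion hKS ⟨x, hx⟩) ∈ ι.range
    rw [heq]
    exact hs
  set f0 : ↥K →* ↥ι.range :=
    MonoidHom.codRestrict (ψ.comp (Subgroup.inclusion hKS)) ι.range hmemK with hf0def
  set eι : H ≃* ↥ι.range := MonoidHom.ofInjective hι with heιdef
  refine ⟨K, hfin, eι.symm.toMonoidHom.comp f0, ?_⟩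
  intro h0
  obtain ⟨s, hs⟩ := hψ (ι h0)
  have hsK0 : s ∈ K0 := by
    rw [hK0def]
    show ψ s ∈ ι.range
    rw [hs]
    exact ⟨h0, rfl⟩
  have hk : (s : SL2Z) ∈ K := by
    rw [hKdef]
    exact Subgroup.mem_map.mpr ⟨s, hsK0, rfl⟩
  refine ⟨⟨(s : SL2Z), hk⟩, ?_⟩
  have h1 : f0 ⟨(s : SL2Z), hk⟩ = ⟨ι h0, ⟨h0, rfl⟩⟩ := by
    apply Subtype.ext
    show ψ (Subgroup.inclusion hKS ⟨(s : SL2Z), hk⟩) = ι h0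
    have : Subgroup.inclusion hKS ⟨(s : SL2Z), hk⟩ = s := Subtype.ext rfl
    rw [this, hs]
  rw [MonoidHom.comp_apply, h1]
  have h2 : (⟨ι h0, ⟨h0, rfl⟩⟩ : ↥ι.range) = eι h0 := by
    apply Subtype.ext
    exact (MonoidHom.ofInjective_apply hι (x := h0)).symm
  rw [h2]
  exact eι.symm_apply_apply h0
end
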